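/- Consider the block matrix A = [[B, x, O],[yᵀ, α, wᵀ],[Oᵀ, z, C]] with B, C square and O zero blocks. Suppose x is in the column space of B but yᵀ is not in the row space of B. If z is in the column space of C, then rank(A) = rank(B) + rank(C) + 1; if z is not in the column space of C, then rank(A) = rank(B) + rank(C) + 2. -/

import Mathlib

open Matrix Module

section helpers
variable {F : Type*} [Field F]

lemma my_finrank_sup_span_singleton {V : Type*} [AddCommGroup V] [Module F V]
    [FiniteDimensional F V] {W : Submodule F V} {y : V} (hy : y ∉ W) :
    finrank F ↥(W ⊔ Submodule.span F {y}) = finrank F W + 1 := by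
  have hy0 : y ≠ 0 := fun h => hy (h ▸ W.zero_mem)
  have h1 : finrank F (Submodule.span F {y}) = 1 := finrank_span_singleton hy0
  have h2 : W ⊓ Submodule.span F {y} = ⊥ := by
    rw [eq_bot_iff]
    intro v hv
    rw [Submodule.mem_inf] at hv
    obtain ⟨c, rfl⟩ := Submodule.mem_span_singleton.mp hv.2
    rcases eq_or_ne c 0 with rfl | hc
    · simp
    · exact absurd (by simpa [smul_smul, inv_mul_cancel₀ hc] using W.smul_mem c⁻¹ hv.1) hy
  have h3 := Submodule.finrank_sup_add_finrank_inf_eq W (Submodule.span F {y})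
  rw [h2, h1] at h3
  simpa using h3

/-- extend a vector by zero on the left summand, as a linear map -/
def extZero (F : Type*) [Field F] {a b : Type*} : (b → F) →ₗ[F] (a ⊕ b → F) where
  toFun v := Sum.elim 0 v
  map_add' u v := by funext i; cases i <;> simp
  map_smul' c v := by funext i; cases i <;> simp

lemma extZero_injective {a b : Type*} : Function.Injective (extZero F (a := a) (b := b)) := by
  intro u v h
  funext j
  exact congrFun h (Sum.inr j)

lemma finrank_map_eq_of_injective {V W : Type*} [AddCommGroup V] [Module F V]
    [AddCommGroup W] [Module F W] (f : V →ₗ[F] W) (hf : Function.Injective f)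
    (p : Submodule F V) : finrank F (p.map f) = finrank F p :=
  (LinearEquiv.finrank_eq (Submodule.equivMapOfInjective f hf p)).symm

end helpers

theorem stmt_10 {F : Type*} [Field F] {m k : ℕ}
    (B : Matrix (Fin m) (Fin m) F) (C : Matrix (Fin k) (Fin k) F)
    (x y : Fin m → F) (w z : Fin k → F) (α : F)
    (A : Matrix (Fin m ⊕ (Fin 1 ⊕ Fin k)) (Fin m ⊕ (Fin 1 ⊕ Fin k)) F)
    (hA : A = Matrix.fromBlocks B
      (Matrix.of fun i j => Sum.elim (fun (_ : Fin 1) => x i) (fun (_ : Fin k) => (0 : F)) j)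
      (Matrix.of fun i j => Sum.elim (fun (_ : Fin 1) => y j) (fun (_ : Fin k) => (0 : F)) i)
      (Matrix.fromBlocks (Matrix.of fun (_ : Fin 1) (_ : Fin 1) => α)
        (Matrix.of fun (_ : Fin 1) j => w j) (Matrix.of fun i (_ : Fin 1) => z i) C))
    (hx : x ∈ Submodule.span F (Set.range Bᵀ))
    (hy : y ∉ Submodule.span F (Set.range B)) :
    (z ∈ Submodule.span F (Set.range Cᵀ) → A.rank = B.rank + C.rank + 1) ∧
    (z ∉ Submodule.span F (Set.range Cᵀ) → A.rank = B.rank + C.rank + 2) := by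
  -- entry lemmas
  have e11 : ∀ i i', A (Sum.inl i) (Sum.inl i') = B i i' := by simp [hA]
  have e12 : ∀ i s, A (Sum.inl i) (Sum.inr (Sum.inl s)) = x i := by simp [hA]
  have e13 : ∀ i j', A (Sum.inl i) (Sum.inr (Sum.inr j')) = 0 := by simp [hA]
  have e21 : ∀ s i', A (Sum.inr (Sum.inl s)) (Sum.inl i') = y i' := by simp [hA]
  have e22 : ∀ s s', A (Sum.inr (Sum.inl s)) (Sum.inr (Sum.inl s')) = α := by simp [hA]
  have e23 : ∀ s j', A (Sum.inr (Sum.inl s)) (Sum.inr (Sum.inr j')) = w j' := by simp [hA]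
  have e31 : ∀ j i', A (Sum.inr (Sum.inr j)) (Sum.inl i') = 0 := by simp [hA]
  have e32 : ∀ j s', A (Sum.inr (Sum.inr j)) (Sum.inr (Sum.inl s')) = z j := by simp [hA]
  have e33 : ∀ j j', A (Sum.inr (Sum.inr j)) (Sum.inr (Sum.inr j')) = C j j' := by simp [hA]
  obtain ⟨u, hu⟩ : ∃ u, B *ᵥ u = x := by
    rw [show Set.range Bᵀ = Set.range B.col from rfl, ← Matrix.range_mulVecLin] at hx
    obtain ⟨u, hu⟩ := hx
    exact ⟨u, hu⟩
  set D : Matrix (Fin k) (Fin 1 ⊕ Fin k) F :=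
    Matrix.of (fun j => Sum.elim (fun _ : Fin 1 => z j) (fun j' => C j j')) with hD
  have key : A.rank = B.rank + 1 + D.rank := by
    rw [Matrix.rank_eq_finrank_span_row]
    change finrank F (Submodule.span F (Set.range A)) = _
    set S : Submodule F ((Fin m ⊕ (Fin 1 ⊕ Fin k)) → F) := Submodule.span F (Set.range A) with hS
    set π : ((Fin m ⊕ (Fin 1 ⊕ Fin k)) → F) →ₗ[F] (Fin m → F) :=
      LinearMap.funLeft F F Sum.inl with hπ
    set f : S →ₗ[F] (Fin m → F) := π ∘ₗ S.subtype with hf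
    have hrn : finrank F S = finrank F (LinearMap.range f) + finrank F (LinearMap.ker f) :=
      (LinearMap.finrank_range_add_finrank_ker f).symm
    -- the image of S under π
    have hcomp : (⇑π ∘ A) = Sum.elim B (Sum.elim (fun _ : Fin 1 => y) (fun _ : Fin k => 0)) := by
      funext idx
      cases idx with
      | inl i => funext i'; exact e11 i i'
      | inr s =>
        cases s with
        | inl s => funext i'; exact e21 s i'
        | inr j => funext i'; exact e31 j i'
    have hmapS : Submodule.map π S = Submodule.span F (Set.range B) ⊔ Submodule.span F {y} := by
      rw [hS, Submodule.map_span, ← Set.range_comp (⇑π) A, hcomp, Set.Sum.elim_range B _,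
        Set.Sum.elim_range, Submodule.span_union, Submodule.span_union, Set.range_const]
      have h0 : Submodule.span F (Set.range (fun _ : Fin k => (0 : Fin m → F))) = ⊥ := by
        rw [Submodule.span_eq_bot]
        rintro v ⟨j, rfl⟩
        rfl
      rw [h0, sup_bot_eq]
    have hrangef : finrank F (LinearMap.range f) = B.rank + 1 := by
      have : LinearMap.range f = Submodule.map π S := by
        rw [hf, LinearMap.range_comp, Submodule.range_subtype]
      rw [this, hmapS, my_finrank_sup_span_singleton hy, Matrix.rank_eq_finrank_span_row]; rfl
    -- the kernel part
    have hkerf : finrank F (LinearMap.ker f) = finrank F ↥(S ⊓ LinearMap.ker π) := by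
      rw [show LinearMap.ker f = Submodule.comap S.subtype (LinearMap.ker π) from
        LinearMap.ker_comp _ _, ← Submodule.map_comap_subtype]
      exact (finrank_map_eq_of_injective _ (Submodule.injective_subtype S) _).symm
    -- formula for a row combination of A
    have hrow : ∀ d : (Fin m ⊕ (Fin 1 ⊕ Fin k)) → F,
        d ᵥ* A = Sum.elim ((d ∘ Sum.inl) ᵥ* B + d (Sum.inr (Sum.inl 0)) • y)
          (Sum.elim
            (fun _ : Fin 1 => (d ∘ Sum.inl) ⬝ᵥ x + d (Sum.inr (Sum.inl 0)) * α
              + (d ∘ Sum.inr ∘ Sum.inr) ⬝ᵥ z)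
            (fun j' => d (Sum.inr (Sum.inl 0)) * w j' + ((d ∘ Sum.inr ∘ Sum.inr) ᵥ* C) j')) := by
      intro d
      funext idx
      cases idx with
      | inl i' =>
        simp [Matrix.vecMul, dotProduct, Fintype.sum_sum_type, e11, e21, e31,
          Fin.sum_univ_one, Function.comp]
      | inr s =>
        cases s with
        | inl s =>
          have : s = 0 := Subsingleton.elim _ _
          subst this
          simp [Matrix.vecMul, dotProduct, Fintype.sum_sum_type, e12, e22, e32,
            Fin.sum_univ_one, Function.comp, add_assoc]
        | inr j' =>
          simp [Matrix.vecMul, dotProduct, Fintype.sum_sum_type, e13, e23, e33,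
            Fin.sum_univ_one, Function.comp]
    -- identify S ⊓ ker π
    have hT : S ⊓ LinearMap.ker π
        = Submodule.map (extZero F) (LinearMap.range D.vecMulLinear) := by
      apply le_antisymm
      · intro v hv
        rw [Submodule.mem_inf] at hv
        obtain ⟨hvS, hvK⟩ := hv
        rw [hS, show Set.range A = Set.range A.row from rfl, ← range_vecMulLinear] at hvS
        obtain ⟨d, rfl⟩ := hvS
        rw [Matrix.vecMulLinear_apply] at hvK ⊢
        have hπ0 : (d ∘ Sum.inl) ᵥ* B + d (Sum.inr (Sum.inl 0)) • y = 0 := by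
          have h1 : π (d ᵥ* A) = 0 := hvK
          funext i'
          have h2 := congrFun h1 i'
          rw [hπ] at h2
          simp only [LinearMap.funLeft_apply, Function.comp] at h2
          rw [hrow d] at h2
          simpa using h2
        have hb0 : d (Sum.inr (Sum.inl 0)) = 0 := by
          by_contra hb
          apply hy
          have h3 : y = (-(d (Sum.inr (Sum.inl 0)))⁻¹) • ((d ∘ Sum.inl) ᵥ* B) := by
            have h4 : d (Sum.inr (Sum.inl 0)) • y = -((d ∘ Sum.inl) ᵥ* B) := by
              rw [eq_neg_iff_add_eq_zero, add_comm]
              exact hπ0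
            rw [neg_smul, ← smul_neg, ← h4, smul_smul, inv_mul_cancel₀ hb, one_smul]
          rw [h3]
          refine Submodule.smul_mem _ _ ?_
          rw [show Set.range B = Set.range B.row from rfl, ← range_vecMulLinear]
          exact ⟨d ∘ Sum.inl, rfl⟩
        have haB : (d ∘ Sum.inl) ᵥ* B = 0 := by
          have := hπ0
          rw [hb0, zero_smul, add_zero] at this
          exact this
        have hax : (d ∘ Sum.inl) ⬝ᵥ x = 0 := by
          rw [← hu, dotProduct_mulVec, haB, zero_dotProduct]
        refine Submodule.mem_map.mpr
          ⟨D.vecMulLinear (d ∘ Sum.inr ∘ Sum.inr), LinearMap.mem_range_self _ _, ?_⟩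
        rw [Matrix.vecMulLinear_apply, hrow d]
        funext idx
        cases idx with
        | inl i' =>
          show (0 : Fin m → F) i' = _
          rw [show ((d ∘ Sum.inl) ᵥ* B + d (Sum.inr (Sum.inl 0)) • y)
            = 0 from by rw [haB, hb0, zero_smul, add_zero]]
          rfl
        | inr s =>
          cases s with
          | inl s =>
            show ((d ∘ Sum.inr ∘ Sum.inr) ᵥ* D) (Sum.inl s) = _
            simp only [Sum.elim_inr, Sum.elim_inl, hax, hb0, zero_mul, zero_add]
            simp [hD, Matrix.vecMul, dotProduct]
          | inr j' =>
            show ((d ∘ Sum.inr ∘ Sum.inr) ᵥ* D) (Sum.inr j') = _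
            simp only [Sum.elim_inr, hb0, zero_mul, zero_add]
            simp [hD, Matrix.vecMul, dotProduct]
      · rintro v hv
        obtain ⟨q, hq, rfl⟩ := Submodule.mem_map.mp hv
        obtain ⟨c, rfl⟩ := hq
        rw [Submodule.mem_inf]
        constructor
        · have hextsum : extZero F (D.vecMulLinear c) = ∑ j, c j • A (Sum.inr (Sum.inr j)) := by
            funext idx
            cases idx with
            | inl i' =>
              show (0 : F) = _
              simp [e31, Finset.sum_apply]
            | inr s =>
              cases s with
              | inl s =>
                show ((c ᵥ* D)) (Sum.inl s) = _
                simp [hD, Matrix.vecMul, dotProduct, e32, Finset.sum_apply]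
              | inr j' =>
                show ((c ᵥ* D)) (Sum.inr j') = _
                simp [hD, Matrix.vecMul, dotProduct, e33, Finset.sum_apply]
          rw [hextsum]
          exact Submodule.sum_mem _ fun j _ =>
            Submodule.smul_mem _ _ (Submodule.subset_span ⟨Sum.inr (Sum.inr j), rfl⟩)
        · show π _ = 0
          funext i'
          rfl
    have hkerD : finrank F ↥(S ⊓ LinearMap.ker π) = D.rank := by
      rw [hT, finrank_map_eq_of_injective _ extZero_injective, range_vecMulLinear,
        Matrix.rank_eq_finrank_span_row]
    rw [hrn, hrangef, hkerf, hkerD]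
  have hDrank1 : z ∈ Submodule.span F (Set.range Cᵀ) → D.rank = C.rank := by
    intro hz
    have hDT : Dᵀ = Sum.elim (fun _ : Fin 1 => z) Cᵀ := by
      funext i j
      cases i <;> rfl
    have hspan : Submodule.span F (Set.range Dᵀ) = Submodule.span F (Set.range Cᵀ) := by
      rw [hDT, Set.Sum.elim_range (fun _ : Fin 1 => z) Cᵀ, Submodule.span_union, Set.range_const]
      exact sup_eq_right.mpr (by rwa [Submodule.span_le, Set.singleton_subset_iff])
    rw [Matrix.rank_eq_finrank_span_cols, show Set.range D.col = Set.range Dᵀ from rfl, hspan,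
      show Set.range Cᵀ = Set.range C.col from rfl, ← Matrix.rank_eq_finrank_span_cols]
  have hDrank2 : z ∉ Submodule.span F (Set.range Cᵀ) → D.rank = C.rank + 1 := by
    intro hz
    have hDT : Dᵀ = Sum.elim (fun _ : Fin 1 => z) Cᵀ := by
      funext i j
      cases i <;> rfl
    have hspan : Submodule.span F (Set.range Dᵀ)
        = Submodule.span F (Set.range Cᵀ) ⊔ Submodule.span F {z} := by
      rw [hDT, Set.Sum.elim_range (fun _ : Fin 1 => z) Cᵀ, Submodule.span_union, Set.range_const, sup_comm]
    rw [Matrix.rank_eq_finrank_span_cols, show Set.range D.col = Set.range Dᵀ from rfl, hspan,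
      my_finrank_sup_span_singleton hz,
      show Set.range Cᵀ = Set.range C.col from rfl, ← Matrix.rank_eq_finrank_span_cols]
  constructor
  · intro hz; rw [key, hDrank1 hz]; ring
  · intro hz; rw [key, hDrank2 hz]; ring
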